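/- Let k ≥ 2 be an even integer, let n ≥ 2 be an integer with n > ((k−2)/2)·(k/2 − ⌊(k−2)/4⌋), and set s = ⌊(k−2)/4⌋ and p(n,k) = s·n + 1 if k ≡ 0 (mod 4), p(n,k) = s·n if k ≡ 2 (mod 4). Consider the 2-edge coloring of K_{n,n} (with parts V and W of size n) whose red edge set is: all edges between a fixed s-element set S ⊆ V and W, if k ≡ 2 (mod 4); or all edges between a fixed s-element set S ⊆ V and W together with one additional edge joining a vertex of V ∖ S to a vertex of W (so the red graph is K_{s,n} with one extra pendant vertex attached to a vertex of the part of size n), if k ≡ 0 (mod 4); all remaining edges are blue. This coloring has exactly p(n,k) red edges and contains no balanced copy of the path P_k (no path with k edges having exactly k/2 red and k/2 blue edges) and no balanced copy of the path P_{k+1} (no path with k+1 edges having at least k/2 edges of each color). -/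

import Mathlib

/-- The number of red edges in a 2-edge coloring of `K_{n,n}`.  The coloring is encoded
as `c : Fin n → Fin n → Bool`, where `c v w = true` means that the edge between vertex `v`
of the first part and vertex `w` of the second part is red, and `c v w = false` means it
is blue. -/
def redTotal {n : ℕ} (c : Fin n → Fin n → Bool) : ℕ :=
  (Finset.univ.filter fun p : Fin n × Fin n => c p.1 p.2 = true).card

/-- The number of blue edges in a 2-edge coloring of `K_{n,n}`. -/
def blueTotal {n : ℕ} (c : Fin n → Fin n → Bool) : ℕ :=
  (Finset.univ.filter fun p : Fin n × Fin n => c p.1 p.2 = false).card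

/-- `redB c u v = true` iff `u` and `v` lie in different parts of `K_{n,n}` and the edge
between them is red (under the coloring `c : Fin n → Fin n → Bool`, where `c v w = true`
means the edge between vertex `v` of the first part and `w` of the second part is red). -/
def redB {n : ℕ} (c : Fin n → Fin n → Bool) : Fin n ⊕ Fin n → Fin n ⊕ Fin n → Bool
  | Sum.inl v, Sum.inr w => c v w
  | Sum.inr w, Sum.inl v => c v w
  | _, _ => false

/-- `blueB c u v = true` iff `u` and `v` lie in different parts of `K_{n,n}` and the edge
between them is blue. -/
def blueB {n : ℕ} (c : Fin n → Fin n → Bool) : Fin n ⊕ Fin n → Fin n ⊕ Fin n → Bool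
  | Sum.inl v, Sum.inr w => !c v w
  | Sum.inr w, Sum.inl v => !c v w
  | _, _ => false

/-- `crossB u v = true` iff `u` and `v` lie in different parts of `K_{n,n}`,
i.e. `u v` is an edge of `K_{n,n}`. -/
def crossB {n : ℕ} : Fin n ⊕ Fin n → Fin n ⊕ Fin n → Bool
  | Sum.inl _, Sum.inr _ => true
  | Sum.inr _, Sum.inl _ => true
  | _, _ => false

/-- `IsPathCopy v` says that the vertex sequence `v : Fin (ℓ+1) → Fin n ⊕ Fin n` realizes
a copy of the path `P_ℓ` with `ℓ` edges in `K_{n,n}`: the vertices are pairwise distinct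
and consecutive vertices lie in different parts (hence are adjacent in `K_{n,n}`). -/
def IsPathCopy {n ℓ : ℕ} (v : Fin (ℓ + 1) → Fin n ⊕ Fin n) : Prop :=
  Function.Injective v ∧ ∀ i : Fin ℓ, crossB (v i.castSucc) (v i.succ) = true

/-- The number of red edges of the path copy `v` in `K_{n,n}` colored by `c`. -/
def pathRedCount {n ℓ : ℕ} (c : Fin n → Fin n → Bool)
    (v : Fin (ℓ + 1) → Fin n ⊕ Fin n) : ℕ :=
  (Finset.univ.filter fun i : Fin ℓ => redB c (v i.castSucc) (v i.succ) = true).card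

/-- The number of blue edges of the path copy `v` in `K_{n,n}` colored by `c`. -/
def pathBlueCount {n ℓ : ℕ} (c : Fin n → Fin n → Bool)
    (v : Fin (ℓ + 1) → Fin n ⊕ Fin n) : ℕ :=
  (Finset.univ.filter fun i : Fin ℓ => blueB c (v i.castSucc) (v i.succ) = true).card

/-- Bipartite balancing number of paths, lower bound (extremal coloring).  Let `k ≥ 2` be
even, `n ≥ 2` with `n > ((k-2)/2)·(k/2 - ⌊(k-2)/4⌋)`, and `s = ⌊(k-2)/4⌋`.  Color red all
edges between a fixed `s`-set `S` of the first part and the whole second part, plus (when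
`k ≡ 0 (mod 4)`) one extra edge from `u ∉ S` to a vertex `w₀` of the second part; all
other edges are blue.  This coloring has exactly `p(n,k)` red edges (where
`p(n,k) = s·n + 1` if `k ≡ 0 (mod 4)` and `p(n,k) = s·n` if `k ≡ 2 (mod 4)`), no balanced
copy of `P_k` (no path with `k` edges, `k/2` of each color), and no balanced copy of
`P_{k+1}` (no path with `k+1` edges having at least `k/2` edges of each color). -/
lemma red_bound {n ℓ : ℕ} (S : Finset (Fin n)) (u w₀ : Fin n)
    (c : Fin n → Fin n → Bool) (b : Bool)
    (hc : ∀ x y, c x y = true ↔ (x ∈ S ∨ (b = true ∧ x = u ∧ y = w₀)))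
    (v : Fin (ℓ + 1) → Fin n ⊕ Fin n) (hinj : Function.Injective v) :
    pathRedCount c v ≤ 2 * S.card + (if b then 1 else 0) := by
  classical
  set A : Finset (Fin ℓ) :=
    Finset.univ.filter fun i => redB c (v i.castSucc) (v i.succ) = true with hA
  set A₁ : Finset (Fin ℓ) :=
    A.filter fun i => ∃ a ∈ S, v i.castSucc = Sum.inl a ∨ v i.succ = Sum.inl a with hA₁
  set A₂ : Finset (Fin ℓ) :=
    A.filter fun i => (v i.castSucc = Sum.inl u ∧ v i.succ = Sum.inr w₀) ∨
      (v i.castSucc = Sum.inr w₀ ∧ v i.succ = Sum.inl u) with hA₂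
  -- the map recording the left endpoint of a red edge and its orientation
  set f : Fin ℓ → Fin n × Bool :=
    fun i => ((v i.castSucc).elim id fun _ => (v i.succ).elim id fun _ => u,
      (v i.castSucc).isRight) with hf
  have hstruct : ∀ i ∈ A₁,
      (∃ a ∈ S, v i.castSucc = Sum.inl a ∧ f i = (a, false)) ∨
      (∃ a ∈ S, v i.succ = Sum.inl a ∧ f i = (a, true)) := by
    intro i hi
    rw [hA₁, Finset.mem_filter] at hi
    obtain ⟨hiA, a₀, ha₀S, ha₀⟩ := hi
    rw [hA, Finset.mem_filter] at hiA
    have hred := hiA.2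
    rcases h1 : v i.castSucc with a | w <;> rcases h2 : v i.succ with a' | w' <;>
      rw [h1, h2] at hred <;> simp only [redB] at hred
    · exact absurd hred (by simp)
    · left
      refine ⟨a, ?_, rfl, by simp [hf, h1, h2]⟩
      rcases ha₀ with h | h
      · rw [h1] at h; cases h; exact ha₀S
      · rw [h2] at h; cases h
    · right
      refine ⟨a', ?_, rfl, by simp [hf, h1, h2]⟩
      rcases ha₀ with h | h
      · rw [h1] at h; cases h
      · rw [h2] at h; cases h; exact ha₀S
    · exact absurd hred (by simp)
  have hcard1 : A₁.card ≤ 2 * S.card := by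
    have := Finset.card_le_card_of_injOn (s := A₁) f
      (t := S ×ˢ (Finset.univ : Finset Bool)) ?_ ?_
    · simpa [Finset.card_product, two_mul, mul_comm] using this
    · intro i hi
      rcases hstruct i hi with ⟨a, haS, _, hfi⟩ | ⟨a, haS, _, hfi⟩ <;>
        simp [hfi, haS]
    · intro i hi j hj hij
      rcases hstruct i hi with ⟨a, _, h1, hfi⟩ | ⟨a, _, h1, hfi⟩ <;>
        rcases hstruct j hj with ⟨a', _, h1', hfj⟩ | ⟨a', _, h1', hfj⟩ <;>
          rw [hfi, hfj] at hij <;> simp [Prod.ext_iff] at hij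
      · have : v i.castSucc = v j.castSucc := by rw [h1, h1', hij]
        exact Fin.castSucc_injective _ (hinj this)
      · have : v i.succ = v j.succ := by rw [h1, h1', hij]
        exact Fin.succ_injective _ (hinj this)
  have hcard2 : A₂.card ≤ 1 := by
    rw [Finset.card_le_one]
    intro i hi j hj
    rw [hA₂, Finset.mem_filter] at hi hj
    rcases hi.2 with ⟨h1, h2⟩ | ⟨h1, h2⟩ <;> rcases hj.2 with ⟨h1', h2'⟩ | ⟨h1', h2'⟩
    · exact Fin.castSucc_injective _ (hinj (by rw [h1, h1']))
    · exfalso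
      have e1 : i.castSucc = j.succ := hinj (by rw [h1, h2'])
      have e2 : i.succ = j.castSucc := hinj (by rw [h2, h1'])
      have e1' := congrArg Fin.val e1
      have e2' := congrArg Fin.val e2
      simp [Fin.val_succ] at e1' e2'
      omega
    · exfalso
      have e1 : i.castSucc = j.succ := hinj (by rw [h1, h2'])
      have e2 : i.succ = j.castSucc := hinj (by rw [h2, h1'])
      have e1' := congrArg Fin.val e1
      have e2' := congrArg Fin.val e2
      simp [Fin.val_succ] at e1' e2'
      omega
    · exact Fin.castSucc_injective _ (hinj (by rw [h1, h1']))
  have hsub : ∀ i ∈ A, i ∈ A₁ ∨ (b = true ∧ i ∈ A₂) := by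
    intro i hi
    have hred : redB c (v i.castSucc) (v i.succ) = true := by
      rw [hA, Finset.mem_filter] at hi; exact hi.2
    have hiA : i ∈ A := hi
    rcases h1 : v i.castSucc with a | w <;> rcases h2 : v i.succ with a' | w' <;>
      rw [h1, h2] at hred <;> simp only [redB] at hred
    · exact absurd hred (by simp)
    · rcases (hc a w').mp hred with ha | ⟨hb, hau, hw⟩
      · exact Or.inl (by rw [hA₁, Finset.mem_filter]; exact ⟨hiA, a, ha, Or.inl h1⟩)
      · refine Or.inr ⟨hb, ?_⟩
        rw [hA₂, Finset.mem_filter]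
        exact ⟨hiA, Or.inl ⟨by rw [h1, hau], by rw [h2, hw]⟩⟩
    · rcases (hc a' w).mp hred with ha | ⟨hb, hau, hw⟩
      · exact Or.inl (by rw [hA₁, Finset.mem_filter]; exact ⟨hiA, a', ha, Or.inr h2⟩)
      · refine Or.inr ⟨hb, ?_⟩
        rw [hA₂, Finset.mem_filter]
        exact ⟨hiA, Or.inr ⟨by rw [h1, hw], by rw [h2, hau]⟩⟩
    · exact absurd hred (by simp)
  have hpA : pathRedCount c v = A.card := rfl
  cases b with
  | false =>
    have hss : A ⊆ A₁ := by
      intro i hi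
      rcases hsub i hi with h | ⟨h, _⟩
      · exact h
      · exact absurd h (by simp)
    calc pathRedCount c v = A.card := hpA
      _ ≤ A₁.card := Finset.card_le_card hss
      _ ≤ 2 * S.card := hcard1
      _ ≤ _ := by simp
  | true =>
    have hss : A ⊆ A₁ ∪ A₂ := by
      intro i hi
      rcases hsub i hi with h | ⟨_, h⟩ <;> simp [Finset.mem_union, h]
    calc pathRedCount c v = A.card := hpA
      _ ≤ (A₁ ∪ A₂).card := Finset.card_le_card hss
      _ ≤ A₁.card + A₂.card := Finset.card_union_le _ _
      _ ≤ 2 * S.card + 1 := by omega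
      _ ≤ _ := by simp

theorem bbal_paths_extremal (k n : ℕ) (hk2 : 2 ≤ k) (hkeven : Even k) (hn2 : 2 ≤ n)
    (hn : (k - 2) / 2 * (k / 2 - (k - 2) / 4) < n)
    (S : Finset (Fin n)) (hS : S.card = (k - 2) / 4) (u w₀ : Fin n) (hu : u ∉ S)
    (c : Fin n → Fin n → Bool)
    (hc : ∀ v w, c v w = true ↔ (v ∈ S ∨ (k % 4 = 0 ∧ v = u ∧ w = w₀))) :
    redTotal c = (if k % 4 = 0 then (k - 2) / 4 * n + 1 else (k - 2) / 4 * n) ∧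
    (¬ ∃ v : Fin (k + 1) → Fin n ⊕ Fin n, IsPathCopy v ∧
        pathRedCount c v = k / 2 ∧ pathBlueCount c v = k / 2) ∧
    (¬ ∃ v : Fin (k + 1 + 1) → Fin n ⊕ Fin n, IsPathCopy v ∧
        k / 2 ≤ pathRedCount c v ∧ k / 2 ≤ pathBlueCount c v) := by
  classical
  have hk2' : k % 2 = 0 := Nat.even_iff.mp hkeven
  have hc' : ∀ x y, c x y = true ↔
      (x ∈ S ∨ ((decide (k % 4 = 0) : Bool) = true ∧ x = u ∧ y = w₀)) := by
    intro x y
    rw [hc]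
    simp [decide_eq_true_iff]
  have hbound : ∀ {ℓ : ℕ} (v : Fin (ℓ + 1) → Fin n ⊕ Fin n),
      Function.Injective v → pathRedCount c v < k / 2 := by
    intro ℓ v hinj
    have h := red_bound S u w₀ c (decide (k % 4 = 0)) hc' v hinj
    by_cases hk4 : k % 4 = 0
    · simp only [hk4, decide_true, if_true] at h
      rw [hS] at h
      omega
    · have : (decide (k % 4 = 0) : Bool) = false := by simp [hk4]
      rw [this] at h
      simp only [Bool.false_eq_true, if_false] at h
      rw [hS] at h
      omega
  refine ⟨?_, ?_, ?_⟩
  · by_cases hk4 : k % 4 = 0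
    · rw [if_pos hk4]
      have hset : (Finset.univ.filter fun p : Fin n × Fin n => c p.1 p.2 = true)
          = S ×ˢ Finset.univ ∪ {(u, w₀)} := by
        ext p
        simp [hc, hk4, Prod.ext_iff]
        exact or_comm
      rw [redTotal, hset, Finset.card_union_of_disjoint, Finset.card_product,
        Finset.card_singleton, Finset.card_univ, Fintype.card_fin, hS]
      simp [Finset.disjoint_singleton_right, hu]
    · rw [if_neg hk4]
      have hset : (Finset.univ.filter fun p : Fin n × Fin n => c p.1 p.2 = true)
          = S ×ˢ Finset.univ := by
        ext p
        simp [hc, hk4, Prod.ext_iff]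
      rw [redTotal, hset, Finset.card_product, Finset.card_univ, Fintype.card_fin, hS]
  · rintro ⟨v, ⟨hinj, -⟩, hred, -⟩
    have := hbound v hinj
    omega
  · rintro ⟨v, ⟨hinj, -⟩, hred, -⟩
    have := hbound v hinj
    omega
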